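/- Fix natural numbers m ≥ 1 and J ≥ 1, integers j₁ ≤ j₂, reals α > 0 and β > 0, and positive reals y_{j₁}, …, y_{j₂}; set b = 2^{mJ}, c = j₂ − j₁ + 1, S(H) = ∑_{j=j₁}^{j₂} y_j·2^{(2H+m)j}, and s*(H) = b·S(H)/(b·c + 2). Define the profiled log posterior φ(H) = lnF(H, s*(H)) for H ∈ (0,1). Then φ is differentiable on (0,1) with derivative φ'(H) = −(b·c + 2)·ln 2·( ∑_{j=j₁}^{j₂} j·y_j·2^{(2H+m)j} ) / S(H) + b·ln 2·∑_{j=j₁}^{j₂} j + (α−1)/H − (β−1)/(1−H). -/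

import Mathlib

open Finset

/-- The log non-normalized posterior `ln F(H, s)` for the Bayesian wavelet-based
estimation of the Hurst exponent, with `b = 2^{mJ}`, `c = j₂ - j₁ + 1`,
a `beta(α, β)` prior on `H` and the non-informative prior `1/σ²` on `σ²`. -/
noncomputable def lnF (m J : ℕ) (j₁ j₂ : ℤ) (α β : ℝ) (y : ℤ → ℝ) (H s : ℝ) : ℝ :=
  -((((2 : ℝ) ^ (m * J)) * ((j₂ - j₁ + 1 : ℤ) : ℝ) + 2) / 2) * Real.log s +
    (∑ j ∈ Finset.Icc j₁ j₂,
      (((2 * H + (m : ℝ)) * (j : ℝ) * ((2 : ℝ) ^ (m * J)) / 2) * Real.log 2 +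
        (((2 : ℝ) ^ (m * J) - 2) / 2) * Real.log (y j))) -
    (((2 : ℝ) ^ (m * J)) / (2 * s)) *
      (∑ j ∈ Finset.Icc j₁ j₂, y j * (2 : ℝ) ^ ((2 * H + (m : ℝ)) * (j : ℝ))) +
    Real.log (Real.Gamma (α + β)) - Real.log (Real.Gamma α) - Real.log (Real.Gamma β) +
    (α - 1) * Real.log H + (β - 1) * Real.log (1 - H) -
    ((j₂ - j₁ + 1 : ℤ) : ℝ) * Real.log (Real.Gamma ((2 : ℝ) ^ (m * J) / 2)) +
    (((2 : ℝ) ^ (m * J)) * ((j₂ - j₁ + 1 : ℤ) : ℝ) / 2) *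
      Real.log ((2 : ℝ) ^ (m * J) / 2)

/-- The profiled log posterior `φ(H) = lnF(H, s*(H))` with
`s*(H) = b·S(H)/(bc+2)` is differentiable on `(0,1)`, with derivative
`φ'(H) = -(bc+2)·ln2·(∑_j j y_j 2^{(2H+m)j})/S(H) + b·ln2·∑_j j + (α-1)/H - (β-1)/(1-H)`. -/
theorem hasDerivAt_profiled_lnF
    (m J : ℕ) (hm : 1 ≤ m) (hJ : 1 ≤ J) (j₁ j₂ : ℤ) (hj : j₁ ≤ j₂)
    (α β : ℝ) (hα : 0 < α) (hβ : 0 < β)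
    (y : ℤ → ℝ) (hy : ∀ j ∈ Finset.Icc j₁ j₂, 0 < y j)
    (H : ℝ) (hH : H ∈ Set.Ioo (0 : ℝ) 1) :
    HasDerivAt
      (fun t => lnF m J j₁ j₂ α β y t
        (((2 : ℝ) ^ (m * J)) *
            (∑ j ∈ Finset.Icc j₁ j₂, y j * (2 : ℝ) ^ ((2 * t + (m : ℝ)) * (j : ℝ))) /
          (((2 : ℝ) ^ (m * J)) * ((j₂ - j₁ + 1 : ℤ) : ℝ) + 2)))
      (-((((2 : ℝ) ^ (m * J)) * ((j₂ - j₁ + 1 : ℤ) : ℝ) + 2)) * Real.log 2 *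
          (∑ j ∈ Finset.Icc j₁ j₂,
            (j : ℝ) * y j * (2 : ℝ) ^ ((2 * H + (m : ℝ)) * (j : ℝ))) /
          (∑ j ∈ Finset.Icc j₁ j₂, y j * (2 : ℝ) ^ ((2 * H + (m : ℝ)) * (j : ℝ))) +
        ((2 : ℝ) ^ (m * J)) * Real.log 2 * (∑ j ∈ Finset.Icc j₁ j₂, (j : ℝ)) +
        (α - 1) / H - (β - 1) / (1 - H)) H := by
  obtain ⟨hH0, hH1⟩ := hH
  have hH1' : (0:ℝ) < 1 - H := by linarith
  simp only [lnF]
  set b : ℝ := (2:ℝ)^(m*J) with hbdef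
  set c : ℝ := ((j₂ - j₁ + 1 : ℤ) : ℝ) with hcdef
  have hbpos : 0 < b := by rw [hbdef]; positivity
  have hcpos : (0:ℝ) < c := by
    rw [hcdef]
    have h0 : (0:ℤ) < j₂ - j₁ + 1 := by omega
    exact_mod_cast h0
  have hbc : (0:ℝ) < b * c + 2 := by positivity
  have hSpos : ∀ t : ℝ,
      0 < ∑ j ∈ Finset.Icc j₁ j₂, y j * (2:ℝ)^((2*t+(m:ℝ))*(j:ℝ)) := by
    intro t
    refine Finset.sum_pos (fun j hjj => ?_) (Finset.nonempty_Icc.mpr hj)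
    have := hy j hjj
    positivity
  have hg : ∀ j : ℤ, HasDerivAt (fun t : ℝ => (2*t+(m:ℝ))*(j:ℝ)) (2*(j:ℝ)) H := by
    intro j
    have h0 : HasDerivAt (fun t : ℝ => 2*t+(m:ℝ)) 2 H := by
      simpa using ((hasDerivAt_id H).const_mul 2).add_const (m:ℝ)
    simpa using h0.mul_const (j:ℝ)
  have hS : HasDerivAt (fun t => ∑ j ∈ Finset.Icc j₁ j₂, y j * (2:ℝ)^((2*t+(m:ℝ))*(j:ℝ)))
      (2 * Real.log 2 *
        ∑ j ∈ Finset.Icc j₁ j₂, (j:ℝ) * y j * (2:ℝ)^((2*H+(m:ℝ))*(j:ℝ))) H := by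
    rw [Finset.mul_sum]
    apply HasDerivAt.fun_sum
    intro j hjj
    have h2 : HasDerivAt (fun t : ℝ => (2:ℝ)^((2*t+(m:ℝ))*(j:ℝ)))
        (((2:ℝ)^((2*H+(m:ℝ))*(j:ℝ)) * Real.log 2) * (2*(j:ℝ))) H := by
      have := (Real.hasStrictDerivAt_const_rpow (by norm_num : (0:ℝ) < 2)
        ((2*H+(m:ℝ))*(j:ℝ))).hasDerivAt.comp H (hg j)
      exact this
    have h3 := h2.const_mul (y j)
    refine h3.congr_deriv ?_
    ring
  have harg : b * (∑ j ∈ Finset.Icc j₁ j₂, y j * (2:ℝ)^((2*H+(m:ℝ))*(j:ℝ))) / (b*c+2) ≠ 0 := by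
    have := hSpos H; positivity
  have h1 := (((hS.const_mul b).div_const (b*c+2)).log harg).const_mul (-((b*c+2)/2))
  have h2 : HasDerivAt (fun t => ∑ j ∈ Finset.Icc j₁ j₂,
      ((2*t+(m:ℝ))*(j:ℝ)*b/2*Real.log 2 + (b-2)/2*Real.log (y j)))
      ((∑ j ∈ Finset.Icc j₁ j₂, (j:ℝ)) * (b * Real.log 2)) H := by
    rw [Finset.sum_mul]
    apply HasDerivAt.fun_sum
    intro j hjj
    have h0 := ((((hg j).mul_const b).div_const 2).mul_const (Real.log 2)).add_const
      ((b-2)/2*Real.log (y j))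
    convert h0 using 1
    ring
  have h3 : HasDerivAt (fun t =>
      b / (2 * (b * (∑ j ∈ Finset.Icc j₁ j₂, y j * (2:ℝ)^((2*t+(m:ℝ))*(j:ℝ))) / (b*c+2))) *
      (∑ j ∈ Finset.Icc j₁ j₂, y j * (2:ℝ)^((2*t+(m:ℝ))*(j:ℝ)))) 0 H := by
    have hfun : (fun t =>
        b / (2 * (b * (∑ j ∈ Finset.Icc j₁ j₂, y j * (2:ℝ)^((2*t+(m:ℝ))*(j:ℝ))) / (b*c+2))) *
        (∑ j ∈ Finset.Icc j₁ j₂, y j * (2:ℝ)^((2*t+(m:ℝ))*(j:ℝ))))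
        = (fun _ : ℝ => (b*c+2)/2) := by
      funext t
      have hs := hSpos t
      field_simp
    rw [hfun]
    exact hasDerivAt_const H _
  have h4 := (Real.hasDerivAt_log hH0.ne').const_mul (α-1)
  have h5 : HasDerivAt (fun t : ℝ => (β-1)*Real.log (1-t)) ((β-1)*(-1/(1-H))) H := by
    have h0 : HasDerivAt (fun t : ℝ => 1 - t) (-1) H := by
      simpa using (hasDerivAt_id H).const_sub 1
    exact (h0.log hH1'.ne').const_mul (β-1)
  have key := h1.add h2 |>.sub h3
    |>.add_const (Real.log (Real.Gamma (α+β)))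
    |>.sub_const (Real.log (Real.Gamma α))
    |>.sub_const (Real.log (Real.Gamma β))
    |>.add h4 |>.add h5
    |>.sub_const (c * Real.log (Real.Gamma (b/2)))
    |>.add_const (b*c/2*Real.log (b/2))
  refine key.congr_deriv ?_
  have hs := (hSpos H).ne'
  have hH0' := hH0.ne'
  have hH1'' := hH1'.ne'
  have hb0 := hbpos.ne'
  have hbc0 := hbc.ne'
  set A := ∑ j ∈ Finset.Icc j₁ j₂, (j:ℝ) * y j * (2:ℝ)^((2*H+(m:ℝ))*(j:ℝ)) with hA
  set S := ∑ j ∈ Finset.Icc j₁ j₂, y j * (2:ℝ)^((2*H+(m:ℝ))*(j:ℝ)) with hS'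
  clear_value A S
  field_simp
  ring
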